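/- Let Q ∈ ℝ^{n×n} be a symmetric positive definite matrix and a ∈ ℝ^n. Define Y_{0,Q} = {(x, z, t) ∈ ℝ^n × ℝ × ℝ : z ∈ {0,1} and t ≥ xᵀQx + (aᵀx)²(1 − z)}. Then the closure of the convex hull of Y_{0,Q} equals {(x, z, t) ∈ ℝ^n × [0,1] × ℝ : t ≥ xᵀQx + (1 − z)(aᵀx)² / (1 + z·aᵀQ⁻¹a)}. -/

import Mathlib

open Matrix Set

lemma aux_cc_pos (u₁ u₂ θ : ℝ) (hu₁ : 0 < u₁) (hu₂ : 0 < u₂) (hθ : 0 ≤ θ) (hθ' : θ ≤ 1) :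
    0 < θ*u₁+(1-θ)*u₂ := by
  rcases le_total u₁ u₂ with h|h
  · nlinarith [mul_nonneg hθ (sub_nonneg.2 h)]
  · nlinarith [mul_nonneg (sub_nonneg.2 hθ') (sub_nonneg.2 h)]

lemma aux_sq_div (s₁ s₂ u₁ u₂ θ : ℝ) (hu₁ : 0 < u₁) (hu₂ : 0 < u₂)
    (hθ : 0 ≤ θ) (hθ' : θ ≤ 1) :
    (θ*s₁+(1-θ)*s₂)^2/(θ*u₁+(1-θ)*u₂) ≤ θ*(s₁^2/u₁) + (1-θ)*(s₂^2/u₂) := by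
  have hu : 0 < θ*u₁+(1-θ)*u₂ := aux_cc_pos u₁ u₂ θ hu₁ hu₂ hθ hθ'
  have h1 : θ*(s₁^2/u₁) + (1-θ)*(s₂^2/u₂) = (θ*s₁^2*u₂+(1-θ)*s₂^2*u₁)/(u₁*u₂) := by
    field_simp; try ring
  rw [h1, div_le_div_iff₀ hu (mul_pos hu₁ hu₂)]
  nlinarith [mul_nonneg (mul_nonneg hθ (by linarith : (0:ℝ) ≤ 1-θ)) (sq_nonneg (s₁*u₂ - s₂*u₁))]

lemma aux_phi (α s₁ s₂ z₁ z₂ θ : ℝ) (hα : 0 < α) (h₁ : 0 ≤ z₁) (h₂ : 0 ≤ z₂)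
    (hθ : 0 ≤ θ) (hθ' : θ ≤ 1) :
    (1-(θ*z₁+(1-θ)*z₂))*(θ*s₁+(1-θ)*s₂)^2/(1+(θ*z₁+(1-θ)*z₂)*α) ≤
      θ*((1-z₁)*s₁^2/(1+z₁*α)) + (1-θ)*((1-z₂)*s₂^2/(1+z₂*α)) + θ*(1-θ)*((s₁-s₂)^2/α) := by
  have hu₁ : 0 < 1+z₁*α := by nlinarith
  have hu₂ : 0 < 1+z₂*α := by nlinarith
  have key := aux_sq_div s₁ s₂ (1+z₁*α) (1+z₂*α) θ hu₁ hu₂ hθ hθ'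
  have hrw : ∀ s z : ℝ, 0 < 1+z*α →
      (1-z)*s^2/(1+z*α) = ((1+α)/α)*(s^2/(1+z*α)) - s^2/α := by
    intro s z hz
    field_simp
    ring
  have hu : 0 < 1+(θ*z₁+(1-θ)*z₂)*α := by
    have := aux_cc_pos (1+z₁*α) (1+z₂*α) θ hu₁ hu₂ hθ hθ'
    nlinarith
  rw [hrw _ _ hu, hrw _ _ hu₁, hrw _ _ hu₂]
  have hueq : 1+(θ*z₁+(1-θ)*z₂)*α = θ*(1+z₁*α)+(1-θ)*(1+z₂*α) := by ring
  rw [hueq]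
  have hfac : 0 < (1+α)/α := by positivity
  have key2 := mul_le_mul_of_nonneg_left key hfac.le
  have hS : θ*(s₁^2/α) + (1-θ)*(s₂^2/α) = (θ*s₁+(1-θ)*s₂)^2/α + θ*(1-θ)*((s₁-s₂)^2/α) := by
    field_simp; try ring
  nlinarith [key2, hS]

set_option maxHeartbeats 1000000 in
/-- Convex hull description of the homogeneous set
`Y_{0,Q} = {(x,z,t) : z ∈ {0,1}, t ≥ xᵀQx + (aᵀx)²(1-z)}`:
`cl conv (Y_{0,Q}) = {(x,z,t) : z ∈ [0,1], t ≥ xᵀQx + (1-z)(aᵀx)²/(1 + z·aᵀQ⁻¹a)}`. -/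
theorem closure_convexHull_homogeneous
    (n : ℕ) (Q : Matrix (Fin n) (Fin n) ℝ) (hQ : Q.PosDef) (a : Fin n → ℝ) :
    closure (convexHull ℝ
      {p : (Fin n → ℝ) × ℝ × ℝ |
        (p.2.1 = 0 ∨ p.2.1 = 1) ∧
          p.1 ⬝ᵥ Q.mulVec p.1 + (a ⬝ᵥ p.1) ^ 2 * (1 - p.2.1) ≤ p.2.2}) =
    {p : (Fin n → ℝ) × ℝ × ℝ |
      p.2.1 ∈ Set.Icc (0 : ℝ) 1 ∧
        p.1 ⬝ᵥ Q.mulVec p.1 +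
          (1 - p.2.1) * (a ⬝ᵥ p.1) ^ 2 / (1 + p.2.1 * (a ⬝ᵥ Q⁻¹.mulVec a)) ≤ p.2.2} := by
  have hQt : Qᵀ = Q := hQ.1
  have hdet : IsUnit Q.det := isUnit_iff_ne_zero.mpr hQ.det_pos.ne'
  have hQb : Q *ᵥ (Q⁻¹ *ᵥ a) = a := by
    rw [Matrix.mulVec_mulVec, Matrix.mul_nonsing_inv Q hdet, Matrix.one_mulVec]
  have hsym : ∀ u w : Fin n → ℝ, u ⬝ᵥ Q *ᵥ w = w ⬝ᵥ Q *ᵥ u := by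
    intro u w
    rw [Matrix.dotProduct_mulVec, ← Matrix.mulVec_transpose, hQt, dotProduct_comm]
  have hq0 : ∀ v, 0 ≤ v ⬝ᵥ Q *ᵥ v := fun v => by
    rcases eq_or_ne v 0 with h|h
    · simp [h]
    · simpa using (hQ.dotProduct_mulVec_pos h).le
  have hαpos : a ≠ 0 → 0 < a ⬝ᵥ Q⁻¹ *ᵥ a := fun h => by simpa using hQ.inv.dotProduct_mulVec_pos h
  have hα0 : 0 ≤ a ⬝ᵥ Q⁻¹ *ᵥ a := by
    rcases eq_or_ne a 0 with h|h
    · simp [h]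
    · exact (hαpos h).le
  have hexp : ∀ (x v : Fin n → ℝ) (c d : ℝ),
      (c • x + d • v) ⬝ᵥ Q *ᵥ (c • x + d • v) =
        c^2*(x ⬝ᵥ Q *ᵥ x) + (2*(c*d))*(x ⬝ᵥ Q *ᵥ v) + d^2*(v ⬝ᵥ Q *ᵥ v) := by
    intro x v c d
    have h := hsym v x
    simp only [Matrix.mulVec_add, Matrix.mulVec_smul, dotProduct_add, add_dotProduct,
      dotProduct_smul, smul_dotProduct, smul_eq_mul]
    rw [h]; ring
  have hCS : ∀ v, (a ⬝ᵥ v)^2 ≤ (a ⬝ᵥ Q⁻¹ *ᵥ a) * (v ⬝ᵥ Q *ᵥ v) := by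
    intro v
    rcases eq_or_ne a 0 with h|h
    · simp [h]
    · have hpos := hαpos h
      have h0 := hq0 ((a ⬝ᵥ Q⁻¹ *ᵥ a) • v + (-(a ⬝ᵥ v)) • (Q⁻¹ *ᵥ a))
      rw [hexp v (Q⁻¹ *ᵥ a) (a ⬝ᵥ Q⁻¹ *ᵥ a) (-(a ⬝ᵥ v))] at h0
      have hvb : v ⬝ᵥ Q *ᵥ (Q⁻¹ *ᵥ a) = a ⬝ᵥ v := by rw [hQb, dotProduct_comm]
      have hbb : (Q⁻¹ *ᵥ a) ⬝ᵥ Q *ᵥ (Q⁻¹ *ᵥ a) = a ⬝ᵥ Q⁻¹ *ᵥ a := by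
        rw [hQb, dotProduct_comm]
      rw [hvb, hbb] at h0
      nlinarith [h0, hpos]
  apply Set.Subset.antisymm
  · -- closure conv Y ⊆ S
    have hSclosed : IsClosed {p : (Fin n → ℝ) × ℝ × ℝ |
        p.2.1 ∈ Set.Icc (0 : ℝ) 1 ∧
          p.1 ⬝ᵥ Q.mulVec p.1 +
            (1 - p.2.1) * (a ⬝ᵥ p.1) ^ 2 / (1 + p.2.1 * (a ⬝ᵥ Q⁻¹.mulVec a)) ≤ p.2.2} := by
      have hD : ∀ z : ℝ, 0 ≤ z → 0 < 1 + z * (a ⬝ᵥ Q⁻¹ *ᵥ a) := fun z hz => by nlinarith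
      have hSeq : {p : (Fin n → ℝ) × ℝ × ℝ |
            p.2.1 ∈ Set.Icc (0 : ℝ) 1 ∧
              p.1 ⬝ᵥ Q.mulVec p.1 +
                (1 - p.2.1) * (a ⬝ᵥ p.1) ^ 2 / (1 + p.2.1 * (a ⬝ᵥ Q⁻¹.mulVec a)) ≤ p.2.2} =
          {p : (Fin n → ℝ) × ℝ × ℝ | p.2.1 ∈ Set.Icc (0 : ℝ) 1} ∩
          {p : (Fin n → ℝ) × ℝ × ℝ |
            (p.1 ⬝ᵥ Q.mulVec p.1 - p.2.2) * (1 + p.2.1 * (a ⬝ᵥ Q⁻¹.mulVec a)) +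
              (1 - p.2.1) * (a ⬝ᵥ p.1) ^ 2 ≤ 0} := by
        ext ⟨x, z, t⟩
        simp only [mem_setOf_eq, mem_inter_iff, mem_Icc]
        constructor
        · rintro ⟨hz, hineq⟩
          refine ⟨hz, ?_⟩
          have hDz := hD z hz.1
          have h' : (1 - z) * (a ⬝ᵥ x) ^ 2 / (1 + z * (a ⬝ᵥ Q⁻¹ *ᵥ a)) ≤ t - x ⬝ᵥ Q *ᵥ x := by
            linarith
          have h2 := (div_le_iff₀ hDz).mp h'
          nlinarith [h2]
        · rintro ⟨hz, hineq⟩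
          refine ⟨hz, ?_⟩
          have hDz := hD z hz.1
          have h' : (1 - z) * (a ⬝ᵥ x) ^ 2 / (1 + z * (a ⬝ᵥ Q⁻¹ *ᵥ a)) ≤ t - x ⬝ᵥ Q *ᵥ x := by
            rw [div_le_iff₀ hDz]
            nlinarith [hineq]
          linarith
      rw [hSeq]
      have hcq : Continuous fun x : Fin n → ℝ => x ⬝ᵥ Q *ᵥ x := by
        simp only [dotProduct, Matrix.mulVec]
        exact continuous_finset_sum _ fun i _ => (continuous_apply i).mul
          (continuous_finset_sum _ fun j _ => continuous_const.mul (continuous_apply j))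
      have hcL : Continuous fun x : Fin n → ℝ => a ⬝ᵥ x := by
        simp only [dotProduct]
        exact continuous_finset_sum _ fun i _ => continuous_const.mul (continuous_apply i)
      have c1 : Continuous fun p : (Fin n → ℝ) × ℝ × ℝ => p.1 ⬝ᵥ Q *ᵥ p.1 :=
        hcq.comp continuous_fst
      have c2 : Continuous fun p : (Fin n → ℝ) × ℝ × ℝ => a ⬝ᵥ p.1 := hcL.comp continuous_fst
      have c3 : Continuous fun p : (Fin n → ℝ) × ℝ × ℝ => p.2.1 :=
        continuous_fst.comp continuous_snd
      have c4 : Continuous fun p : (Fin n → ℝ) × ℝ × ℝ => p.2.2 :=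
        continuous_snd.comp continuous_snd
      refine IsClosed.inter (isClosed_Icc.preimage c3) (isClosed_le ?_ continuous_const)
      exact ((c1.sub c4).mul (continuous_const.add (c3.mul continuous_const))).add
        ((continuous_const.sub c3).mul (c2.pow 2))
    have hSconv : Convex ℝ {p : (Fin n → ℝ) × ℝ × ℝ |
        p.2.1 ∈ Set.Icc (0 : ℝ) 1 ∧
          p.1 ⬝ᵥ Q.mulVec p.1 +
            (1 - p.2.1) * (a ⬝ᵥ p.1) ^ 2 / (1 + p.2.1 * (a ⬝ᵥ Q⁻¹.mulVec a)) ≤ p.2.2} := by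
      rintro ⟨x₁, z₁, t₁⟩ ⟨⟨hz₁0, hz₁1⟩, hp₁⟩ ⟨x₂, z₂, t₂⟩ ⟨⟨hz₂0, hz₂1⟩, hp₂⟩ θ θ' hθ hθ' hsum
      obtain rfl : θ' = 1 - θ := by linarith
      have hθ1 : θ ≤ 1 := by linarith
      simp only [mem_setOf_eq, mem_Icc, Prod.smul_mk, Prod.mk_add_mk, smul_eq_mul] at *
      constructor
      · constructor <;> nlinarith [mul_nonneg hθ hz₁0,
          mul_nonneg (by linarith : (0:ℝ) ≤ 1-θ) hz₂0,
          mul_nonneg hθ (by linarith : (0:ℝ) ≤ 1 - z₁),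
          mul_nonneg (by linarith : (0:ℝ) ≤ 1-θ) (by linarith : (0:ℝ) ≤ 1 - z₂)]
      · -- main inequality
        have hLcomb : a ⬝ᵥ (θ • x₁ + (1-θ) • x₂) = θ*(a ⬝ᵥ x₁) + (1-θ)*(a ⬝ᵥ x₂) := by
          simp [dotProduct_add, dotProduct_smul, smul_eq_mul]
        have hqcomb := hexp x₁ x₂ θ (1-θ)
        have hdvec : (1:ℝ) • x₁ + (-1:ℝ) • x₂ = x₁ - x₂ := by
          simp [sub_eq_add_neg]
        have hdq : (x₁ - x₂) ⬝ᵥ Q *ᵥ (x₁ - x₂) =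
            x₁ ⬝ᵥ Q *ᵥ x₁ - 2*(x₁ ⬝ᵥ Q *ᵥ x₂) + x₂ ⬝ᵥ Q *ᵥ x₂ := by
          rw [← hdvec, hexp x₁ x₂ 1 (-1)]; ring
        have hdL : a ⬝ᵥ (x₁ - x₂) = a ⬝ᵥ x₁ - a ⬝ᵥ x₂ := by
          simp [dotProduct_sub]
        rw [hLcomb, hqcomb]
        rcases eq_or_ne a 0 with ha|ha
        · -- a = 0 case
          have hL0 : ∀ v : Fin n → ℝ, a ⬝ᵥ v = 0 := fun v => by rw [ha]; simp
          have hd := hq0 (x₁ - x₂)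
          rw [hdq] at hd
          simp only [hL0, mul_zero, zero_mul, add_zero, ne_eq, OfNat.ofNat_ne_zero,
            not_false_eq_true, zero_pow, zero_div] at hp₁ hp₂ ⊢
          have h1 := mul_le_mul_of_nonneg_left hp₁ hθ
          have h2 := mul_le_mul_of_nonneg_left hp₂ (by linarith : (0:ℝ) ≤ 1-θ)
          have h3 := mul_le_mul_of_nonneg_left hd (mul_nonneg hθ (by linarith : (0:ℝ) ≤ 1-θ))
          nlinarith [h1, h2, h3]
        · have hαp := hαpos ha
          have key := aux_phi (a ⬝ᵥ Q⁻¹ *ᵥ a) (a ⬝ᵥ x₁) (a ⬝ᵥ x₂) z₁ z₂ θ hαp hz₁0 hz₂0 hθ hθ1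
          have hd := hCS (x₁ - x₂)
          rw [hdq, hdL] at hd
          have hdiv : (a ⬝ᵥ x₁ - a ⬝ᵥ x₂)^2/(a ⬝ᵥ Q⁻¹ *ᵥ a) ≤
              x₁ ⬝ᵥ Q *ᵥ x₁ - 2*(x₁ ⬝ᵥ Q *ᵥ x₂) + x₂ ⬝ᵥ Q *ᵥ x₂ := by
            rw [div_le_iff₀ hαp]
            nlinarith [hd]
          have h4 := mul_le_mul_of_nonneg_left hdiv
            (mul_nonneg hθ (by linarith : (0:ℝ) ≤ 1-θ))
          have h1 := mul_le_mul_of_nonneg_left hp₁ hθ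
          have h2 := mul_le_mul_of_nonneg_left hp₂ (by linarith : (0:ℝ) ≤ 1-θ)
          linarith [key, h4, h1, h2]
    refine closure_minimal (convexHull_min ?_ hSconv) hSclosed
    rintro ⟨x, z, t⟩ ⟨hz01, hineq⟩
    rcases hz01 with rfl|rfl
    · refine ⟨by norm_num, ?_⟩
      simp only at hineq ⊢
      norm_num at hineq ⊢
      linarith
    · refine ⟨by norm_num, ?_⟩
      simp only at hineq ⊢
      norm_num at hineq ⊢
      linarith
  · -- S ⊆ closure conv Y
    rintro ⟨x, z, t⟩ ⟨⟨hz0, hz1⟩, hineq⟩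
    apply subset_closure
    simp only [mem_setOf_eq] at hineq
    rcases eq_or_lt_of_le hz0 with h0|h0
    · apply subset_convexHull
      have h0' : (0:ℝ) = z := h0
      refine ⟨Or.inl h0'.symm, ?_⟩
      simp only [mem_setOf_eq]
      rw [← h0'] at hineq ⊢
      norm_num at hineq ⊢
      linarith
    rcases eq_or_lt_of_le hz1 with h1|h1
    · apply subset_convexHull
      have h1' : z = 1 := h1
      refine ⟨Or.inr h1', ?_⟩
      simp only [mem_setOf_eq]
      rw [h1'] at hineq ⊢
      norm_num at hineq ⊢
      linarith
    · -- 0 < z < 1 : explicit two-point decomposition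
      set α := a ⬝ᵥ Q⁻¹ *ᵥ a with hαdef
      set b := Q⁻¹ *ᵥ a with hbdef
      set L := a ⬝ᵥ x with hLdef
      set D := 1 + z * α with hDdef
      have hD : 0 < D := by rw [hDdef]; nlinarith
      have hqexp : ∀ c : ℝ, (x + c • b) ⬝ᵥ Q *ᵥ (x + c • b) =
          x ⬝ᵥ Q *ᵥ x + 2*c*L + c^2*α := by
        intro c
        have h := hexp x b 1 c
        rw [one_smul] at h
        rw [h, one_pow]
        have hxb : x ⬝ᵥ Q *ᵥ b = L := by rw [hbdef, hQb, dotProduct_comm]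
        have hbb : b ⬝ᵥ Q *ᵥ b = α := by rw [hbdef, hQb, dotProduct_comm]
        rw [hxb, hbb]; ring
      have hLexp : ∀ c : ℝ, a ⬝ᵥ (x + c • b) = L + c*α := by
        intro c
        rw [dotProduct_add, dotProduct_smul, smul_eq_mul, hLdef, hbdef, hαdef]
      have slack : 0 ≤ t - (x ⬝ᵥ Q *ᵥ x + (1-z)*L^2/D) := by
        rw [hDdef, hLdef]
        linarith [hineq]
      set c₀ : ℝ := -(z*L/D) with hc₀
      set c₁ : ℝ := (1-z)*L/D with hc₁
      set x₀ := x + c₀ • b with hx₀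
      set x₁ := x + c₁ • b with hx₁
      set s : ℝ := t - (x ⬝ᵥ Q *ᵥ x + (1-z)*L^2/D) with hs
      have hmem₀ : ((x₀, (0:ℝ), x₀ ⬝ᵥ Q *ᵥ x₀ + (a ⬝ᵥ x₀)^2 + s) :
          (Fin n → ℝ) × ℝ × ℝ) ∈ {p : (Fin n → ℝ) × ℝ × ℝ |
            (p.2.1 = 0 ∨ p.2.1 = 1) ∧
              p.1 ⬝ᵥ Q.mulVec p.1 + (a ⬝ᵥ p.1) ^ 2 * (1 - p.2.1) ≤ p.2.2} := by
        refine ⟨Or.inl rfl, ?_⟩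
        simp only [mem_setOf_eq]
        norm_num
        linarith [slack]
      have hmem₁ : ((x₁, (1:ℝ), x₁ ⬝ᵥ Q *ᵥ x₁ + s) :
          (Fin n → ℝ) × ℝ × ℝ) ∈ {p : (Fin n → ℝ) × ℝ × ℝ |
            (p.2.1 = 0 ∨ p.2.1 = 1) ∧
              p.1 ⬝ᵥ Q.mulVec p.1 + (a ⬝ᵥ p.1) ^ 2 * (1 - p.2.1) ≤ p.2.2} := by
        refine ⟨Or.inr rfl, ?_⟩
        simp only [mem_setOf_eq]
        norm_num
        linarith [slack]
      apply segment_subset_convexHull hmem₀ hmem₁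
      refine ⟨1-z, z, by linarith, h0.le, by ring, ?_⟩
      simp only [Prod.smul_mk, Prod.mk_add_mk, smul_eq_mul, Prod.mk.injEq]
      refine ⟨?_, by ring, ?_⟩
      · -- vector component
        have hveq : (1-z) • x₀ + z • x₁ = x + ((1-z)*c₀ + z*c₁) • b := by
          rw [hx₀, hx₁]
          module
        rw [hveq]
        have hc : (1-z)*c₀ + z*c₁ = 0 := by
          rw [hc₀, hc₁]
          field_simp
          ring
        rw [hc, zero_smul, add_zero]
      · -- t component
        rw [hqexp c₀, hqexp c₁, hLexp c₀, hs, hc₀, hc₁, hDdef]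
        have hDne : (1 + z*α) ≠ 0 := by rw [hDdef] at hD; exact hD.ne'
        field_simp
        ring
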